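/- Let G be a finite abelian group. Then d(G) = e(G) = f(G), where d(G) is the Davenport constant (smallest m such that every sequence of length m over G has a nonempty zero-sum subsequence), e(G) is the smallest m such that every zero-sum sequence over G contains a nonempty zero-sum subsequence of length at most m, and f(G) is the smallest m such that every sequence of length d(G) contains a nonempty zero-sum subsequence of length at most m. -/

import Mathlib

/-- The additive Davenport constant `d(G)`: the smallest `m` such that every sequence of
length `m` over `G` has a nonempty zero-sum subsequence. -/
noncomputable def dA (G : Type*) [AddCommGroup G] : ℕ :=
  sInf {m | 0 < m ∧ ∀ S : List G, S.length = m →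
    ∃ T : List G, T ≠ [] ∧ T.Sublist S ∧ T.sum = 0}

/-- `e(G)`: the smallest `m` such that every nonempty zero-sum sequence over `G`
contains a nonempty zero-sum subsequence of length at most `m`. -/
noncomputable def eA (G : Type*) [AddCommGroup G] : ℕ :=
  sInf {m | 0 < m ∧ ∀ S : List G, S ≠ [] → S.sum = 0 →
    ∃ T : List G, T ≠ [] ∧ T.Sublist S ∧ T.length ≤ m ∧ T.sum = 0}

/-- `f(G)`: the smallest `m` such that every sequence of length `d(G)` over `G`
contains a nonempty zero-sum subsequence of length at most `m`. -/
noncomputable def fA (G : Type*) [AddCommGroup G] : ℕ :=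
  sInf {m | 0 < m ∧ ∀ S : List G, S.length = dA G →
    ∃ T : List G, T ≠ [] ∧ T.Sublist S ∧ T.length ≤ m ∧ T.sum = 0}

/-- The complement of a sublist is a sublist, with complementary sum and length. -/
lemma sublist_compl {G : Type*} [AddCommGroup G] {T S : List G} (h : T.Sublist S) :
    ∃ U : List G, U.Sublist S ∧ T.sum + U.sum = S.sum ∧ T.length + U.length = S.length := by
  induction h with
  | slnil => exact ⟨[], List.Sublist.refl _, by simp, by simp⟩
  | cons a h ih =>
      obtain ⟨U, hU, hs, hl⟩ := ih
      refine ⟨a :: U, hU.cons₂ a, ?_, ?_⟩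
      · simp only [List.sum_cons, ← hs]; abel
      · simp only [List.length_cons]; omega
  | cons_cons a h ih =>
      obtain ⟨U, hU, hs, hl⟩ := ih
      refine ⟨U, hU.cons a, ?_, ?_⟩
      · simp only [List.sum_cons, ← hs]; abel
      · simp only [List.length_cons]; omega

/-- Pigeonhole: every sequence of length `|G|` has a nonempty zero-sum sublist. -/
lemma card_mem_dset (G : Type*) [AddCommGroup G] [Finite G] :
    Nat.card G ∈ {m | 0 < m ∧ ∀ S : List G, S.length = m →
      ∃ T : List G, T ≠ [] ∧ T.Sublist S ∧ T.sum = 0} := by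
  classical
  have := Fintype.ofFinite G
  refine ⟨Nat.card_pos, fun S hS => ?_⟩
  set n := Nat.card G with hn
  have hcard : Fintype.card G < Fintype.card (Fin (n + 1)) := by
    simp [hn, Nat.card_eq_fintype_card]
  obtain ⟨i, j, hij, hfij⟩ := Fintype.exists_ne_map_eq_of_card_lt
    (fun i : Fin (n + 1) => (S.take i.1).sum) hcard
  -- wlog i < j
  rcases lt_or_gt_of_ne (fun h => hij (Fin.ext h) : (i : ℕ) ≠ (j : ℕ)) with h | h
  · refine ⟨(S.take j.1).drop i.1, ?_, ?_, ?_⟩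
    · have : ((S.take j.1).drop i.1).length = j.1 - i.1 := by
        simp [List.length_drop, List.length_take, hS]
        omega
      intro hnil
      rw [hnil] at this
      simp at this
      omega
    · exact ((S.take j.1).drop_sublist i.1).trans (S.take_sublist j.1)
    · have hsplit : (S.take j.1) = (S.take j.1).take i.1 ++ (S.take j.1).drop i.1 :=
        (List.take_append_drop _ _).symm
      have htt : (S.take j.1).take i.1 = S.take i.1 := by
        rw [List.take_take]
        congr 1
        omega
      have := congrArg List.sum hsplit
      rw [List.sum_append, htt] at this
      have := hfij ▸ this
      -- this : (S.take j.1).sum = (S.take j.1).sum + ((S.take j.1).drop i.1).sum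
      have h0 : ((S.take j.1).drop i.1).sum = 0 := by
        have : (S.take j.1).sum = (S.take j.1).sum + ((S.take j.1).drop i.1).sum := by
          nth_rewrite 1 [hsplit]
          rw [List.sum_append, htt, hfij]
        linear_combination (norm := abel) this.symm
      exact h0
  · refine ⟨(S.take i.1).drop j.1, ?_, ?_, ?_⟩
    · have : ((S.take i.1).drop j.1).length = i.1 - j.1 := by
        simp [List.length_drop, List.length_take, hS]
        omega
      intro hnil
      rw [hnil] at this
      simp at this
      omega
    · exact ((S.take i.1).drop_sublist j.1).trans (S.take_sublist i.1)
    · have hsplit : (S.take i.1) = (S.take i.1).take j.1 ++ (S.take i.1).drop j.1 :=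
        (List.take_append_drop _ _).symm
      have htt : (S.take i.1).take j.1 = S.take j.1 := by
        rw [List.take_take]
        congr 1
        omega
      have h0 : (S.take i.1).sum = (S.take i.1).sum + ((S.take i.1).drop j.1).sum := by
        nth_rewrite 1 [hsplit]
        rw [List.sum_append, htt, hfij]
      linear_combination (norm := abel) h0.symm

/-- For a finite abelian group, `d(G) = e(G) = f(G)`. -/
theorem abelian_d_eq_e_eq_f (G : Type*) [AddCommGroup G] [Finite G] :
    dA G = eA G ∧ eA G = fA G := by
  classical
  set Dset := {m | 0 < m ∧ ∀ S : List G, S.length = m →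
    ∃ T : List G, T ≠ [] ∧ T.Sublist S ∧ T.sum = 0} with hDset
  set Eset := {m | 0 < m ∧ ∀ S : List G, S ≠ [] → S.sum = 0 →
    ∃ T : List G, T ≠ [] ∧ T.Sublist S ∧ T.length ≤ m ∧ T.sum = 0} with hEset
  set Fset := {m | 0 < m ∧ ∀ S : List G, S.length = dA G →
    ∃ T : List G, T ≠ [] ∧ T.Sublist S ∧ T.length ≤ m ∧ T.sum = 0} with hFset
  have hDne : Dset.Nonempty := ⟨Nat.card G, card_mem_dset G⟩
  have hdmem : dA G ∈ Dset := Nat.sInf_mem hDne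
  obtain ⟨hdpos, hdprop⟩ := hdmem
  -- d ∈ Eset
  have hdE : dA G ∈ Eset := by
    refine ⟨hdpos, fun S hSne hS0 => ?_⟩
    by_cases h : S.length ≤ dA G
    · exact ⟨S, hSne, List.Sublist.refl _, h, hS0⟩
    · push_neg at h
      have hlen : (S.take (dA G)).length = dA G := by
        rw [List.length_take]; omega
      obtain ⟨T, hTne, hTsub, hTsum⟩ := hdprop _ hlen
      exact ⟨T, hTne, hTsub.trans (S.take_sublist _),
        le_trans hTsub.length_le (le_of_eq hlen), hTsum⟩
  have hEne : Eset.Nonempty := ⟨dA G, hdE⟩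
  have heD : eA G ≤ dA G := Nat.sInf_le hdE
  have hemem : eA G ∈ Eset := Nat.sInf_mem hEne
  obtain ⟨hepos, heprop⟩ := hemem
  -- e ∈ Fset
  have heF : eA G ∈ Fset := by
    refine ⟨hepos, fun S hS => ?_⟩
    obtain ⟨T, hTne, hTsub, hTsum⟩ := hdprop S hS
    obtain ⟨T', hT'ne, hT'sub, hT'len, hT'sum⟩ := heprop T hTne hTsum
    exact ⟨T', hT'ne, hT'sub.trans hTsub, hT'len, hT'sum⟩
  have hfE : fA G ≤ eA G := Nat.sInf_le heF
  -- every element of Fset is ≥ dA G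
  have hFlower : ∀ m ∈ Fset, dA G ≤ m := by
    rintro m ⟨hmpos, hmprop⟩
    by_contra hlt
    push_neg at hlt
    have hd2 : 2 ≤ dA G := by omega
    -- d - 1 is not in Dset
    have hdd : dA G = sInf Dset := by rw [hDset]; rfl
    have hnot : dA G - 1 ∉ Dset := Nat.notMem_of_lt_sInf (by omega)
    rw [hDset] at hnot
    simp only [Set.mem_setOf_eq, not_and, not_forall] at hnot
    obtain ⟨S, hSlen, hSfree⟩ := hnot (by omega)
    push_neg at hSfree
    -- hSfree : ∀ T, T ≠ [] → T.Sublist S → T.sum ≠ 0  (shape may differ, handle below)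
    set L := S ++ [-S.sum] with hL
    have hLlen : L.length = dA G := by
      simp [hL, hSlen]; omega
    obtain ⟨T, hTne, hTsub, hTlen, hTsum⟩ := hmprop L hLlen
    rw [hL, List.sublist_append_iff] at hTsub
    obtain ⟨T₁, T₂, hTeq, hT₁, hT₂⟩ := hTsub
    have hSnozero : ∀ T' : List G, T' ≠ [] → T'.Sublist S → T'.sum ≠ 0 := by
      intro T' h1 h2 h3
      exact hSfree T' h1 h2 h3
    rcases List.sublist_singleton.mp hT₂ with h2 | h2
    · -- T = T₁, a sublist of S with sum 0
      rw [h2, List.append_nil] at hTeq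
      exact hSnozero T (hTeq ▸ hTne) (hTeq ▸ hT₁) hTsum
    · -- T = T₁ ++ [-S.sum]
      have hT₁sum : T₁.sum = S.sum := by
        have := hTsum
        rw [hTeq, h2, List.sum_append] at this
        simp at this
        linear_combination (norm := abel) this
      have hT₁len : T₁.length < S.length := by
        have : T.length = T₁.length + 1 := by rw [hTeq, h2]; simp
        omega
      obtain ⟨U, hUsub, hUsum, hUlen⟩ := sublist_compl hT₁
      have hUne : U ≠ [] := by
        intro h; rw [h] at hUlen; simp at hUlen; omega
      have hUzero : U.sum = 0 := by
        rw [hT₁sum] at hUsum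
        linear_combination (norm := abel) hUsum
      exact hSnozero U hUne hUsub hUzero
  have hdF : dA G ≤ fA G := hFlower _ (Nat.sInf_mem ⟨eA G, heF⟩)
  constructor <;> omega
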